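/- For every n ≥ 1 there exist constants δ₀ ∈ (0,1) and c ≥ 1, depending only on n, such that the following holds. Let δ ≤ δ₀ and let Φ : B_2 → ℝ^{n+1} be a C² diffeomorphism onto its image with B_1 ⊆ Φ(B_2), Φ(0) = 0, DΦ|_0 = Id, and sup_{w ∈ B_2}(|Φ(w) − w| + ‖DΦ|_w − Id‖ + ‖D²Φ|_w‖) ≤ δ. Then for every a ∈ B_{1/16}, every n-dimensional linear subspace V ⊆ ℝ^{n+1}, every 0 < r < 1/4, every y ∈ B_r(a), and every x ∈ (a + V) ∩ B_r(a), there exists a point x̃ ∈ Φ^{−1}(a) + D(Φ^{−1})|_a(V) with |x̃ − Φ^{−1}(a)| ≤ (1 + cδ)·r and |Φ^{−1}(y) − x̃| ≤ 2|y − x| + c·sup_{B_2}‖D²Φ‖·r². -/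

import Mathlib

open Metric

set_option maxHeartbeats 1000000 in
/-- (Claim 3 in the paper.) For a `C²` diffeomorphism `Φ` close to the
identity, points close to an affine plane `a + V` are mapped by `Φ^{-1}` close to the
affine plane `Φ^{-1}(a) + D(Φ^{-1})|_a(V)`, up to an error quadratic in the scale. -/
theorem stmt_15 (n : ℕ) (hn : 1 ≤ n) :
    ∃ δ₀ c : ℝ, 0 < δ₀ ∧ δ₀ < 1 ∧ 1 ≤ c ∧
      ∀ δ : ℝ, 0 ≤ δ → δ ≤ δ₀ →
      ∀ Φ : EuclideanSpace ℝ (Fin (n + 1)) → EuclideanSpace ℝ (Fin (n + 1)),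
        ContDiffOn ℝ 2 Φ (ball 0 2) →
        Set.InjOn Φ (ball 0 2) →
        ball (0 : EuclideanSpace ℝ (Fin (n + 1))) 1 ⊆ Φ '' ball 0 2 →
        Φ 0 = 0 →
        fderiv ℝ Φ 0 = ContinuousLinearMap.id ℝ (EuclideanSpace ℝ (Fin (n + 1))) →
        (∀ w ∈ ball (0 : EuclideanSpace ℝ (Fin (n + 1))) 2,
          ‖Φ w - w‖ +
            ‖fderiv ℝ Φ w - ContinuousLinearMap.id ℝ (EuclideanSpace ℝ (Fin (n + 1)))‖ +
            ‖fderiv ℝ (fderiv ℝ Φ) w‖ ≤ δ) →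
      ∀ a ∈ ball (0 : EuclideanSpace ℝ (Fin (n + 1))) (1 / 16),
      ∀ V : Submodule ℝ (EuclideanSpace ℝ (Fin (n + 1))), Module.finrank ℝ V = n →
      ∀ r : ℝ, 0 < r → r < 1 / 4 →
      ∀ y ∈ ball a r,
      ∀ x ∈ {p : EuclideanSpace ℝ (Fin (n + 1)) |
          p - a ∈ (V : Set (EuclideanSpace ℝ (Fin (n + 1))))} ∩ ball a r,
      ∀ a' ∈ ball (0 : EuclideanSpace ℝ (Fin (n + 1))) 2, Φ a' = a →
      ∃ xt : EuclideanSpace ℝ (Fin (n + 1)),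
        xt - a' ∈ ⇑(fderiv ℝ Φ a') ⁻¹' (V : Set (EuclideanSpace ℝ (Fin (n + 1)))) ∧
        ‖xt - a'‖ ≤ (1 + c * δ) * r ∧
        ∀ y' ∈ ball (0 : EuclideanSpace ℝ (Fin (n + 1))) 2, Φ y' = y →
          ‖y' - xt‖ ≤ 2 * ‖y - x‖ +
            c * (⨆ w ∈ ball (0 : EuclideanSpace ℝ (Fin (n + 1))) 2,
              ‖fderiv ℝ (fderiv ℝ Φ) w‖) * r ^ 2 := by
  refine ⟨1/2, 8, by norm_num, by norm_num, by norm_num, ?_⟩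
  intro δ hδ0 hδhalf Φ hΦ _hinj _himg _hΦ0 _hDΦ0 hδb
  intro a ha V _hV r hr0 hr4 y hy x hx a' ha' hΦa'
  set S : ℝ := ⨆ w ∈ ball (0 : EuclideanSpace ℝ (Fin (n + 1))) 2,
      ‖fderiv ℝ (fderiv ℝ Φ) w‖ with hSdef
  have hball : IsOpen (ball (0 : EuclideanSpace ℝ (Fin (n + 1))) 2) := isOpen_ball
  have hdiff : ∀ z ∈ ball (0 : EuclideanSpace ℝ (Fin (n + 1))) 2, DifferentiableAt ℝ Φ z :=
    fun z hz => (hΦ.differentiableOn (by norm_num)).differentiableAt (hball.mem_nhds hz)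
  have hf'cd : ContDiffOn ℝ 1 (fderiv ℝ Φ) (ball (0 : EuclideanSpace ℝ (Fin (n + 1))) 2) :=
    hΦ.fderiv_of_isOpen hball (by norm_num)
  have hf'diff : ∀ z ∈ ball (0 : EuclideanSpace ℝ (Fin (n + 1))) 2,
      DifferentiableAt ℝ (fderiv ℝ Φ) z :=
    fun z hz => (hf'cd.differentiableOn (by norm_num)).differentiableAt (hball.mem_nhds hz)
  -- extract the pieces of the hypothesis bound
  have hd1 : ∀ w ∈ ball (0 : EuclideanSpace ℝ (Fin (n + 1))) 2,
      ‖fderiv ℝ Φ w - ContinuousLinearMap.id ℝ (EuclideanSpace ℝ (Fin (n + 1)))‖ ≤ δ := by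
    intro w hw
    have h := hδb w hw
    have h1 := norm_nonneg (Φ w - w)
    have h2 := norm_nonneg (fderiv ℝ (fderiv ℝ Φ) w)
    linarith
  have hd2 : ∀ w ∈ ball (0 : EuclideanSpace ℝ (Fin (n + 1))) 2,
      ‖fderiv ℝ (fderiv ℝ Φ) w‖ ≤ δ := by
    intro w hw
    have h := hδb w hw
    have h1 := norm_nonneg (Φ w - w)
    have h2 := norm_nonneg (fderiv ℝ Φ w - ContinuousLinearMap.id ℝ (EuclideanSpace ℝ (Fin (n + 1))))
    linarith
  have hSbdd : BddAbove (Set.range fun w => ⨆ _ : w ∈ ball (0 : EuclideanSpace ℝ (Fin (n + 1))) 2,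
      ‖fderiv ℝ (fderiv ℝ Φ) w‖) := by
    refine ⟨δ, ?_⟩
    rintro q ⟨w, rfl⟩
    by_cases hw : w ∈ ball (0 : EuclideanSpace ℝ (Fin (n + 1))) 2
    · show (⨆ _ : w ∈ ball (0 : EuclideanSpace ℝ (Fin (n + 1))) 2,
          ‖fderiv ℝ (fderiv ℝ Φ) w‖) ≤ δ
      rw [ciSup_pos hw]; exact hd2 w hw
    · show (⨆ _ : w ∈ ball (0 : EuclideanSpace ℝ (Fin (n + 1))) 2,
          ‖fderiv ℝ (fderiv ℝ Φ) w‖) ≤ δ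
      simp only [hw]
      simpa using hδ0
  have hS : ∀ z ∈ ball (0 : EuclideanSpace ℝ (Fin (n + 1))) 2,
      ‖fderiv ℝ (fderiv ℝ Φ) z‖ ≤ S := by
    intro z hz
    have h := le_ciSup hSbdd z
    rwa [ciSup_pos hz] at h
  have hS0 : 0 ≤ S := le_trans (norm_nonneg (fderiv ℝ (fderiv ℝ Φ) 0)) (hS 0 (mem_ball_self (by norm_num)))
  -- mean value estimate for the derivative (second-order control)
  have hA : ∀ z1 ∈ ball (0 : EuclideanSpace ℝ (Fin (n + 1))) 2,
      ∀ z2 ∈ ball (0 : EuclideanSpace ℝ (Fin (n + 1))) 2,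
      ‖fderiv ℝ Φ z2 - fderiv ℝ Φ z1‖ ≤ S * ‖z2 - z1‖ := fun z1 h1 z2 h2 =>
    (convex_ball _ _).norm_image_sub_le_of_norm_fderiv_le hf'diff hS h1 h2
  -- mean value estimate for Φ - id
  have hB : ∀ z1 ∈ ball (0 : EuclideanSpace ℝ (Fin (n + 1))) 2,
      ∀ z2 ∈ ball (0 : EuclideanSpace ℝ (Fin (n + 1))) 2,
      ‖(Φ z2 - z2) - (Φ z1 - z1)‖ ≤ δ * ‖z2 - z1‖ := by
    intro z1 h1 z2 h2
    have hder : ∀ z ∈ ball (0 : EuclideanSpace ℝ (Fin (n + 1))) 2,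
        HasFDerivWithinAt (fun w => Φ w - w)
          (fderiv ℝ Φ z - ContinuousLinearMap.id ℝ (EuclideanSpace ℝ (Fin (n + 1))))
          (ball (0 : EuclideanSpace ℝ (Fin (n + 1))) 2) z := fun z hz =>
      (((hdiff z hz).hasFDerivAt).sub (hasFDerivAt_id z)).hasFDerivWithinAt
    exact (convex_ball _ _).norm_image_sub_le_of_norm_hasFDerivWithin_le hder hd1 h1 h2
  set L := fderiv ℝ Φ a' with hLdef
  have hLnear : ∀ z : EuclideanSpace ℝ (Fin (n + 1)), ‖z - L z‖ ≤ δ * ‖z‖ := by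
    intro z
    have h1 : ‖(ContinuousLinearMap.id ℝ (EuclideanSpace ℝ (Fin (n + 1))) - L) z‖ ≤
        ‖ContinuousLinearMap.id ℝ (EuclideanSpace ℝ (Fin (n + 1))) - L‖ * ‖z‖ :=
      (ContinuousLinearMap.id ℝ (EuclideanSpace ℝ (Fin (n + 1))) - L).le_opNorm z
    have h2 : ‖ContinuousLinearMap.id ℝ (EuclideanSpace ℝ (Fin (n + 1))) - L‖ ≤ δ := by
      rw [norm_sub_rev]; exact hd1 a' ha'
    have h3 : (ContinuousLinearMap.id ℝ (EuclideanSpace ℝ (Fin (n + 1))) - L) z = z - L z := by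
      simp
    rw [h3] at h1
    exact h1.trans (mul_le_mul_of_nonneg_right h2 (norm_nonneg z))
  have hLlow : ∀ z : EuclideanSpace ℝ (Fin (n + 1)), ‖z‖ ≤ ‖L z‖ + δ * ‖z‖ := by
    intro z
    calc ‖z‖ = ‖L z + (z - L z)‖ := by congr 1; abel
      _ ≤ ‖L z‖ + ‖z - L z‖ := norm_add_le _ _
      _ ≤ ‖L z‖ + δ * ‖z‖ := add_le_add_right (hLnear z) _
  have hLinj : Function.Injective L := by
    intro z1 z2 h12
    have h := hLlow (z1 - z2)
    rw [map_sub, h12, sub_self, norm_zero] at h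
    have hz : ‖z1 - z2‖ ≤ 0 := by nlinarith [norm_nonneg (z1 - z2)]
    exact sub_eq_zero.mp (norm_le_zero_iff.mp hz)
  have hLsurj : Function.Surjective L := by
    have h := LinearMap.injective_iff_surjective
      (f := (L : EuclideanSpace ℝ (Fin (n + 1)) →ₗ[ℝ] EuclideanSpace ℝ (Fin (n + 1))))
    exact h.mp hLinj
  obtain ⟨v, hv⟩ := hLsurj (x - a)
  have hxar : ‖x - a‖ ≤ r := by
    have h := mem_ball.mp hx.2
    rw [dist_eq_norm] at h
    linarith
  have hvb : ‖v‖ ≤ ‖x - a‖ + δ * ‖v‖ := by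
    have h := hLlow v
    rwa [hv] at h
  have hv2r : ‖v‖ ≤ 2 * r := by nlinarith [norm_nonneg v]
  refine ⟨a' + v, ?_, ?_, ?_⟩
  · show L (a' + v - a') ∈ (V : Set (EuclideanSpace ℝ (Fin (n + 1))))
    rw [add_sub_cancel_left, hv]
    exact hx.1
  · rw [add_sub_cancel_left]
    nlinarith [mul_le_mul_of_nonneg_left hv2r hδ0]
  · intro y' hy' hΦy'
    -- first: ‖y' - a'‖ ≤ 2r
    have hBya := hB a' ha' y' hy'
    rw [hΦy', hΦa'] at hBya
    have hD : ‖(y - a) - (y' - a')‖ ≤ δ * ‖y' - a'‖ := by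
      have hh : (y - y') - (a - a') = (y - a) - (y' - a') := by abel
      rwa [hh] at hBya
    have htri : ‖y' - a'‖ ≤ ‖y - a‖ + ‖(y - a) - (y' - a')‖ := by
      calc ‖y' - a'‖ = ‖(y - a) - ((y - a) - (y' - a'))‖ := by congr 1; abel
        _ ≤ ‖y - a‖ + ‖(y - a) - (y' - a')‖ := norm_sub_le _ _
    have hya : ‖y - a‖ ≤ r := by
      have h := mem_ball.mp hy
      rw [dist_eq_norm] at h
      linarith
    have hy'a' : ‖y' - a'‖ ≤ 2 * r := by nlinarith [norm_nonneg (y' - a')]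
    -- second-order Taylor estimate along the segment from a' to y'
    have hseg : segment ℝ a' y' ⊆ ball (0 : EuclideanSpace ℝ (Fin (n + 1))) 2 :=
      (convex_ball _ _).segment_subset ha' hy'
    have hC : ‖(y - a) - L (y' - a')‖ ≤ S * (2 * r) * ‖y' - a'‖ := by
      have hder : ∀ z ∈ segment ℝ a' y', HasFDerivWithinAt (fun w => Φ w - L w)
          (fderiv ℝ Φ z - L) (segment ℝ a' y') z := fun z hz =>
        (((hdiff z (hseg hz)).hasFDerivAt).sub L.hasFDerivAt).hasFDerivWithinAt
      have hbound : ∀ z ∈ segment ℝ a' y', ‖fderiv ℝ Φ z - L‖ ≤ S * (2 * r) := by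
        intro z hz
        have h1 := hA a' ha' z (hseg hz)
        have h2 : ‖z - a'‖ ≤ ‖y' - a'‖ := by
          obtain ⟨u, t, hu, ht, hut, rfl⟩ := hz
          have hu1 : u = 1 - t := by linarith
          have hz' : (u • a' + t • y') - a' = t • (y' - a') := by
            rw [hu1, sub_smul, one_smul, smul_sub]; abel
          rw [hz', norm_smul, Real.norm_eq_abs, abs_of_nonneg ht]
          nlinarith [norm_nonneg (y' - a')]
        have h3 : S * ‖z - a'‖ ≤ S * (2 * r) :=
          mul_le_mul_of_nonneg_left (h2.trans hy'a') hS0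
        exact h1.trans h3
      have hmv := (convex_segment a' y').norm_image_sub_le_of_norm_hasFDerivWithin_le hder hbound
        (left_mem_segment ℝ a' y') (right_mem_segment ℝ a' y')
      rw [hΦy', hΦa'] at hmv
      calc ‖(y - a) - L (y' - a')‖ = ‖(y - L y') - (a - L a')‖ := by
            rw [map_sub]; congr 1; abel
        _ ≤ S * (2 * r) * ‖y' - a'‖ := hmv
    -- conclude
    have hLw : L (y' - (a' + v)) = (L (y' - a') - (y - a)) + (y - x) := by
      have h1 : y' - (a' + v) = (y' - a') - v := by abel
      rw [h1, map_sub, hv]; abel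
    have hLwn : ‖L (y' - (a' + v))‖ ≤ S * (2 * r) * (2 * r) + ‖y - x‖ := by
      rw [hLw]
      calc ‖(L (y' - a') - (y - a)) + (y - x)‖
          ≤ ‖L (y' - a') - (y - a)‖ + ‖y - x‖ := norm_add_le _ _
        _ ≤ S * (2 * r) * (2 * r) + ‖y - x‖ := by
            rw [norm_sub_rev]
            have h2 : S * (2 * r) * ‖y' - a'‖ ≤ S * (2 * r) * (2 * r) :=
              mul_le_mul_of_nonneg_left hy'a' (mul_nonneg hS0 (by linarith))
            linarith [hC]
    have hwlow := hLlow (y' - (a' + v))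
    have hfin : ‖y' - (a' + v)‖ ≤ 2 * ‖y - x‖ + 8 * S * r ^ 2 := by
      nlinarith [norm_nonneg (y' - (a' + v)), norm_nonneg (L (y' - (a' + v)))]
    calc ‖y' - (a' + v)‖ ≤ 2 * ‖y - x‖ + 8 * S * r ^ 2 := hfin
      _ = 2 * ‖y - x‖ + 8 * S * r ^ 2 := rfl
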